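/- arXiv:2009.05270 — 3 statements merged into one kernel-verified Lean document; each statement's English description precedes it below -/
import Mathlib

section
/- Let F be a field, r, s, γ ∈ F and v ∈ F[h]. Then the generalized down-up algebra L(v,r,s,γ) is isomorphic as an F-algebra to the quantum generalized Heisenberg algebra H_s(rh−γ, −v). Conversely, any quantum generalized Heisenberg algebra H_q(f,g) with f(h) = ah + b for a, b ∈ F is isomorphic to the generalized down-up algebra L(−g, a, q, −b). -/
open Polynomial

/-- The three generators `x`, `y`, `h` of a quantum generalized Heisenberg algebra. -/
inductive QGHAGen : Type
  | x : QGHAGen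
  | y : QGHAGen
  | h : QGHAGen

/-- The defining relations of the quantum generalized Heisenberg algebra `H_q(f,g)`:
`h*x = x*f(h)`, `y*h = f(h)*y`, and `y*x - q*(x*y) = g(h)`. -/
inductive QGHARel (F : Type*) [Field F] (q : F) (f g : F[X]) :
    FreeAlgebra F QGHAGen → FreeAlgebra F QGHAGen → Prop
  | hx : QGHARel F q f g
      (FreeAlgebra.ι F QGHAGen.h * FreeAlgebra.ι F QGHAGen.x)
      (FreeAlgebra.ι F QGHAGen.x * aeval (FreeAlgebra.ι F QGHAGen.h) f)
  | yh : QGHARel F q f g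
      (FreeAlgebra.ι F QGHAGen.y * FreeAlgebra.ι F QGHAGen.h)
      (aeval (FreeAlgebra.ι F QGHAGen.h) f * FreeAlgebra.ι F QGHAGen.y)
  | yx : QGHARel F q f g
      (FreeAlgebra.ι F QGHAGen.y * FreeAlgebra.ι F QGHAGen.x)
      (q • (FreeAlgebra.ι F QGHAGen.x * FreeAlgebra.ι F QGHAGen.y)
        + aeval (FreeAlgebra.ι F QGHAGen.h) g)

/-- The quantum generalized Heisenberg algebra `H_q(f,g)`. -/
def QGHA (F : Type*) [Field F] (q : F) (f g : F[X]) : Type _ :=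
  RingQuot (QGHARel F q f g)

namespace QGHA

variable {F : Type*} [Field F] (q : F) (f g : F[X])

instance : Ring (QGHA F q f g) :=
  inferInstanceAs (Ring (RingQuot (QGHARel F q f g)))

instance : Algebra F (QGHA F q f g) :=
  inferInstanceAs (Algebra F (RingQuot (QGHARel F q f g)))

/-- The generator `x` of `H_q(f,g)`. -/
def x : QGHA F q f g :=
  RingQuot.mkAlgHom F (QGHARel F q f g) (FreeAlgebra.ι F QGHAGen.x)

/-- The generator `y` of `H_q(f,g)`. -/
def y : QGHA F q f g :=
  RingQuot.mkAlgHom F (QGHARel F q f g) (FreeAlgebra.ι F QGHAGen.y)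

/-- The generator `h` of `H_q(f,g)`. -/
def h : QGHA F q f g :=
  RingQuot.mkAlgHom F (QGHARel F q f g) (FreeAlgebra.ι F QGHAGen.h)

end QGHA
/-- The three generators `d`, `u`, `h` of a generalized down-up algebra. -/
inductive GDUAGen : Type
  | d : GDUAGen
  | u : GDUAGen
  | h : GDUAGen

/-- The defining relations of the generalized down-up algebra `L(v,r,s,γ)`:
`d*h - r*(h*d) + γ*d = 0`, `h*u - r*(u*h) + γ*u = 0`, and `d*u - s*(u*d) + v(h) = 0`. -/
inductive GDUARel (F : Type*) [Field F] (v : Polynomial F) (r s γ : F) :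
    FreeAlgebra F GDUAGen → FreeAlgebra F GDUAGen → Prop
  | dh : GDUARel F v r s γ
      (FreeAlgebra.ι F GDUAGen.d * FreeAlgebra.ι F GDUAGen.h)
      (r • (FreeAlgebra.ι F GDUAGen.h * FreeAlgebra.ι F GDUAGen.d)
        - γ • FreeAlgebra.ι F GDUAGen.d)
  | hu : GDUARel F v r s γ
      (FreeAlgebra.ι F GDUAGen.h * FreeAlgebra.ι F GDUAGen.u)
      (r • (FreeAlgebra.ι F GDUAGen.u * FreeAlgebra.ι F GDUAGen.h)
        - γ • FreeAlgebra.ι F GDUAGen.u)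
  | du : GDUARel F v r s γ
      (FreeAlgebra.ι F GDUAGen.d * FreeAlgebra.ι F GDUAGen.u)
      (s • (FreeAlgebra.ι F GDUAGen.u * FreeAlgebra.ι F GDUAGen.d)
        - Polynomial.aeval (FreeAlgebra.ι F GDUAGen.h) v)

/-- The generalized down-up algebra `L(v,r,s,γ)`. -/
def GDUA (F : Type*) [Field F] (v : Polynomial F) (r s γ : F) : Type _ :=
  RingQuot (GDUARel F v r s γ)

instance {F : Type*} [Field F] (v : Polynomial F) (r s γ : F) : Ring (GDUA F v r s γ) :=
  inferInstanceAs (Ring (RingQuot (GDUARel F v r s γ)))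

instance {F : Type*} [Field F] (v : Polynomial F) (r s γ : F) : Algebra F (GDUA F v r s γ) :=
  inferInstanceAs (Algebra F (RingQuot (GDUARel F v r s γ)))


namespace QGHA

variable {F : Type*} [Field F] {q : F} {f g : F[X]}

theorem hx_rel : h q f g * x q f g = x q f g * aeval (h q f g) f := by
  have := RingQuot.mkAlgHom_rel F (QGHARel.hx (F := F) (q := q) (f := f) (g := g))
  simp [x, h, map_mul, ← Polynomial.aeval_algHom_apply] at this
  exact this

theorem yh_rel : y q f g * h q f g = aeval (h q f g) f * y q f g := by
  have := RingQuot.mkAlgHom_rel F (QGHARel.yh (F := F) (q := q) (f := f) (g := g))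
  simp [y, h, map_mul, ← Polynomial.aeval_algHom_apply] at this
  exact this

theorem yx_rel : y q f g * x q f g = q • (x q f g * y q f g) + aeval (h q f g) g := by
  have := RingQuot.mkAlgHom_rel F (QGHARel.yx (F := F) (q := q) (f := f) (g := g))
  simp [x, y, h, map_mul, map_add, map_smul, ← Polynomial.aeval_algHom_apply] at this
  exact this

end QGHA

namespace GDUA

variable {F : Type*} [Field F] {v : F[X]} {r s γ : F}

/-- The generator `d`. -/
def d (F : Type*) [Field F] (v : F[X]) (r s γ : F) : GDUA F v r s γ :=
  RingQuot.mkAlgHom F (GDUARel F v r s γ) (FreeAlgebra.ι F GDUAGen.d)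

/-- The generator `u`. -/
def u (F : Type*) [Field F] (v : F[X]) (r s γ : F) : GDUA F v r s γ :=
  RingQuot.mkAlgHom F (GDUARel F v r s γ) (FreeAlgebra.ι F GDUAGen.u)

/-- The generator `h`. -/
def h (F : Type*) [Field F] (v : F[X]) (r s γ : F) : GDUA F v r s γ :=
  RingQuot.mkAlgHom F (GDUARel F v r s γ) (FreeAlgebra.ι F GDUAGen.h)

theorem dh_rel : d F v r s γ * h F v r s γ = r • (h F v r s γ * d F v r s γ) - γ • d F v r s γ := by
  have := RingQuot.mkAlgHom_rel F (GDUARel.dh (F := F) (v := v) (r := r) (s := s) (γ := γ))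
  simp [d, h, map_mul, map_sub, map_smul] at this
  exact this

theorem hu_rel : h F v r s γ * u F v r s γ = r • (u F v r s γ * h F v r s γ) - γ • u F v r s γ := by
  have := RingQuot.mkAlgHom_rel F (GDUARel.hu (F := F) (v := v) (r := r) (s := s) (γ := γ))
  simp [u, h, map_mul, map_sub, map_smul] at this
  exact this

theorem du_rel : d F v r s γ * u F v r s γ
    = s • (u F v r s γ * d F v r s γ) - aeval (h F v r s γ) v := by
  have := RingQuot.mkAlgHom_rel F (GDUARel.du (F := F) (v := v) (r := r) (s := s) (γ := γ))
  simp [d, u, h, map_mul, map_sub, map_smul, ← Polynomial.aeval_algHom_apply] at this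
  exact this

end GDUA

section Iso

variable {F : Type*} [Field F] (v : F[X]) (r s γ : F)

/-- Images of the `GDUA` generators in `QGHA`. -/
noncomputable def fwdGen : GDUAGen → QGHA F s (C r * X - C γ) (-v)
  | GDUAGen.d => QGHA.y s (C r * X - C γ) (-v)
  | GDUAGen.u => QGHA.x s (C r * X - C γ) (-v)
  | GDUAGen.h => QGHA.h s (C r * X - C γ) (-v)

/-- Images of the `QGHA` generators in `GDUA`. -/
noncomputable def bwdGen : QGHAGen → GDUA F v r s γ
  | QGHAGen.x => GDUA.u F v r s γ
  | QGHAGen.y => GDUA.d F v r s γ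
  | QGHAGen.h => GDUA.h F v r s γ

/-- The forward map. -/
noncomputable def gduaToQgha : GDUA F v r s γ →ₐ[F] QGHA F s (C r * X - C γ) (-v) :=
  RingQuot.liftAlgHom F ⟨FreeAlgebra.lift F (fwdGen v r s γ), by
      rintro a b (⟨⟩ | ⟨⟩ | ⟨⟩) <;>
        simp only [map_mul, map_sub, map_smul, ← Polynomial.aeval_algHom_apply,
          FreeAlgebra.lift_ι_apply, fwdGen]
      · rw [QGHA.yh_rel]
        simp [map_sub, map_mul, aeval_C, aeval_X, Algebra.algebraMap_eq_smul_one,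
          sub_mul, smul_mul_assoc, mul_smul_comm]
      · rw [QGHA.hx_rel]
        simp [map_sub, map_mul, aeval_C, aeval_X, Algebra.algebraMap_eq_smul_one,
          mul_sub, smul_mul_assoc, mul_smul_comm]
      · rw [QGHA.yx_rel]
        simp [sub_eq_add_neg]⟩

/-- The backward map. -/
noncomputable def qghaToGdua : QGHA F s (C r * X - C γ) (-v) →ₐ[F] GDUA F v r s γ :=
  RingQuot.liftAlgHom F ⟨FreeAlgebra.lift F (bwdGen v r s γ), by
      rintro a b (⟨⟩ | ⟨⟩ | ⟨⟩) <;>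
        simp only [map_mul, map_add, map_sub, map_smul, ← Polynomial.aeval_algHom_apply,
          FreeAlgebra.lift_ι_apply, bwdGen]
      · rw [GDUA.hu_rel]
        simp [map_sub, map_mul, aeval_C, aeval_X, Algebra.algebraMap_eq_smul_one,
          mul_sub, smul_mul_assoc, mul_smul_comm]
      · rw [GDUA.dh_rel]
        simp [map_sub, map_mul, aeval_C, aeval_X, Algebra.algebraMap_eq_smul_one,
          sub_mul, smul_mul_assoc, mul_smul_comm]
      · rw [GDUA.du_rel]
        simp [sub_eq_add_neg]⟩

theorem gduaToQgha_gen (t : GDUAGen) :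
    gduaToQgha v r s γ (RingQuot.mkAlgHom F (GDUARel F v r s γ) (FreeAlgebra.ι F t))
      = fwdGen v r s γ t := by
  rw [gduaToQgha]
  exact (RingQuot.liftAlgHom_mkAlgHom_apply _ _ _ _).trans (FreeAlgebra.lift_ι_apply _ _)

theorem qghaToGdua_gen (t : QGHAGen) :
    qghaToGdua v r s γ
      (RingQuot.mkAlgHom F (QGHARel F s (C r * X - C γ) (-v)) (FreeAlgebra.ι F t))
      = bwdGen v r s γ t := by
  rw [qghaToGdua]
  exact (RingQuot.liftAlgHom_mkAlgHom_apply _ _ _ _).trans (FreeAlgebra.lift_ι_apply _ _)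

/-- The isomorphism. -/
noncomputable def gduaEquivQgha : GDUA F v r s γ ≃ₐ[F] QGHA F s (C r * X - C γ) (-v) :=
  AlgEquiv.ofAlgHom (gduaToQgha v r s γ) (qghaToGdua v r s γ)
    (by
      apply RingQuot.ringQuot_ext'
      apply FreeAlgebra.hom_ext
      funext t
      cases t
      · exact (congrArg (gduaToQgha v r s γ) (qghaToGdua_gen v r s γ QGHAGen.x)).trans
          (gduaToQgha_gen v r s γ GDUAGen.u)
      · exact (congrArg (gduaToQgha v r s γ) (qghaToGdua_gen v r s γ QGHAGen.y)).trans
          (gduaToQgha_gen v r s γ GDUAGen.d)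
      · exact (congrArg (gduaToQgha v r s γ) (qghaToGdua_gen v r s γ QGHAGen.h)).trans
          (gduaToQgha_gen v r s γ GDUAGen.h))
    (by
      apply RingQuot.ringQuot_ext'
      apply FreeAlgebra.hom_ext
      funext t
      cases t
      · exact (congrArg (qghaToGdua v r s γ) (gduaToQgha_gen v r s γ GDUAGen.d)).trans
          (qghaToGdua_gen v r s γ QGHAGen.y)
      · exact (congrArg (qghaToGdua v r s γ) (gduaToQgha_gen v r s γ GDUAGen.u)).trans
          (qghaToGdua_gen v r s γ QGHAGen.x)
      · exact (congrArg (qghaToGdua v r s γ) (gduaToQgha_gen v r s γ GDUAGen.h)).trans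
          (qghaToGdua_gen v r s γ QGHAGen.h))

end Iso

/-- For a field `F`, `r, s, γ ∈ F` and `v ∈ F[h]`, the generalized down-up
algebra `L(v,r,s,γ)` is isomorphic as an `F`-algebra to the quantum generalized Heisenberg
algebra `H_s(r·h − γ, −v)`.  Conversely, any quantum generalized Heisenberg algebra
`H_q(f,g)` with `f(h) = a·h + b` is isomorphic to `L(−g, a, q, −b)`. -/
theorem gdua_iso_qgha {F : Type*} [Field F] :
    (∀ (v : F[X]) (r s γ : F),
      Nonempty (GDUA F v r s γ ≃ₐ[F] QGHA F s (C r * X - C γ) (-v))) ∧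
    (∀ (q : F) (f g : F[X]) (a b : F), f = C a * X + C b →
      Nonempty (QGHA F q f g ≃ₐ[F] GDUA F (-g) a q (-b))) := by
  constructor
  · intro v r s γ
    exact ⟨gduaEquivQgha v r s γ⟩
  · intro q f g a b hf
    have e := gduaEquivQgha (F := F) (-g) a q (-b)
    have h1 : C a * X - C (-b) = f := by rw [hf, map_neg, sub_neg_eq_add]
    rw [h1, neg_neg] at e
    exact ⟨e.symm⟩
end

section
/- Let F be a field, q ∈ F, f, g ∈ F[h] and α ∈ F. Then there is an F-algebra isomorphism H_q(f, g) ≅ H_q(f(h−α)+α, g(h−α)) sending x ↦ x, y ↦ y and h ↦ h − α. -/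
open Polynomial

/- ============ auxiliary lemmas ============ -/

namespace QGHAAux

variable {F : Type*} [Field F] (q : F) (f g : F[X])

lemma aeval_comp_sub {B : Type*} [Ring B] [Algebra F B] (p : F[X]) (α : F) (b : B) :
    aeval b (p.comp (X - C α)) = aeval (b - algebraMap F B α) p := by
  rw [aeval_comp]; simp

lemma rel_hx : QGHA.h q f g * QGHA.x q f g = QGHA.x q f g * aeval (QGHA.h q f g) f := by
  have h1 := RingQuot.mkAlgHom_rel F (QGHARel.hx (F := F) (q := q) (f := f) (g := g))
  simp only [map_mul, ← Polynomial.aeval_algHom_apply] at h1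
  exact h1

lemma rel_yh : QGHA.y q f g * QGHA.h q f g = aeval (QGHA.h q f g) f * QGHA.y q f g := by
  have h1 := RingQuot.mkAlgHom_rel F (QGHARel.yh (F := F) (q := q) (f := f) (g := g))
  simp only [map_mul, ← Polynomial.aeval_algHom_apply] at h1
  exact h1

lemma rel_yx : QGHA.y q f g * QGHA.x q f g
    = q • (QGHA.x q f g * QGHA.y q f g) + aeval (QGHA.h q f g) g := by
  have h1 := RingQuot.mkAlgHom_rel F (QGHARel.yx (F := F) (q := q) (f := f) (g := g))
  simp only [map_mul, map_add, map_smul, ← Polynomial.aeval_algHom_apply] at h1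
  exact h1

variable (α : F)

local notation "f'" => f.comp (X - C α) + C α
local notation "g'" => g.comp (X - C α)

/-- images of generators under the forward map -/
noncomputable def fwdGen : QGHAGen → QGHA F q f' g'
  | .x => QGHA.x q f' g'
  | .y => QGHA.y q f' g'
  | .h => QGHA.h q f' g' - algebraMap F _ α

noncomputable def bwdGen : QGHAGen → QGHA F q f g
  | .x => QGHA.x q f g
  | .y => QGHA.y q f g
  | .h => QGHA.h q f g + algebraMap F _ α

lemma aeval_fprime (b : QGHA F q f' g') :
    aeval b f' = aeval (b - algebraMap F _ α) f + algebraMap F _ α := by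
  rw [map_add, aeval_comp_sub, aeval_C]

noncomputable def fwd : QGHA F q f g →ₐ[F] QGHA F q f' g' :=
  RingQuot.liftAlgHom F ⟨FreeAlgebra.lift F (fwdGen q f g α), by
    intro a b rel
    cases rel with
    | hx =>
        simp only [map_mul, FreeAlgebra.lift_ι_apply, ← Polynomial.aeval_algHom_apply,
          fwdGen]
        have key := rel_hx q f' g'
        rw [aeval_fprime] at key
        rw [sub_mul, key, mul_add, ← Algebra.commutes α (QGHA.x q f' g')]
        exact add_sub_cancel_right _ _
    | yh =>
        simp only [map_mul, FreeAlgebra.lift_ι_apply, ← Polynomial.aeval_algHom_apply,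
          fwdGen]
        have key := rel_yh q f' g'
        rw [aeval_fprime] at key
        rw [mul_sub, key, add_mul, Algebra.commutes α (QGHA.y q f' g')]
        exact add_sub_cancel_right _ _
    | yx =>
        simp only [map_mul, map_add, map_smul, FreeAlgebra.lift_ι_apply,
          ← Polynomial.aeval_algHom_apply, fwdGen]
        have key := rel_yx q f' g'
        rw [aeval_comp_sub] at key
        exact key⟩

noncomputable def bwd : QGHA F q f' g' →ₐ[F] QGHA F q f g :=
  RingQuot.liftAlgHom F ⟨FreeAlgebra.lift F (bwdGen q f g α), by
    intro a b rel
    cases rel with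
    | hx =>
        simp only [map_mul, FreeAlgebra.lift_ι_apply, ← Polynomial.aeval_algHom_apply,
          bwdGen]
        rw [map_add, aeval_comp_sub, aeval_C, add_sub_cancel_right]
        rw [add_mul, rel_hx q f g, mul_add, ← Algebra.commutes α (QGHA.x q f g)]
    | yh =>
        simp only [map_mul, FreeAlgebra.lift_ι_apply, ← Polynomial.aeval_algHom_apply,
          bwdGen]
        rw [map_add, aeval_comp_sub, aeval_C, add_sub_cancel_right]
        rw [mul_add, rel_yh q f g, add_mul, Algebra.commutes α (QGHA.y q f g)]
    | yx =>
        simp only [map_mul, map_add, map_smul, FreeAlgebra.lift_ι_apply,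
          ← Polynomial.aeval_algHom_apply, bwdGen]
        rw [aeval_comp_sub, add_sub_cancel_right]
        exact rel_yx q f g⟩

lemma fwd_x : fwd q f g α (QGHA.x q f g) = QGHA.x q f' g' := by
  rw [fwd, QGHA.x]; erw [RingQuot.liftAlgHom_mkAlgHom_apply, FreeAlgebra.lift_ι_apply]; rfl

lemma fwd_y : fwd q f g α (QGHA.y q f g) = QGHA.y q f' g' := by
  rw [fwd, QGHA.y]; erw [RingQuot.liftAlgHom_mkAlgHom_apply, FreeAlgebra.lift_ι_apply]; rfl

lemma fwd_h : fwd q f g α (QGHA.h q f g) = QGHA.h q f' g' - algebraMap F _ α := by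
  rw [fwd, QGHA.h]; erw [RingQuot.liftAlgHom_mkAlgHom_apply, FreeAlgebra.lift_ι_apply]; rfl

lemma bwd_x : bwd q f g α (QGHA.x q f' g') = QGHA.x q f g := by
  rw [bwd, QGHA.x]; erw [RingQuot.liftAlgHom_mkAlgHom_apply, FreeAlgebra.lift_ι_apply]; rfl

lemma bwd_y : bwd q f g α (QGHA.y q f' g') = QGHA.y q f g := by
  rw [bwd, QGHA.y]; erw [RingQuot.liftAlgHom_mkAlgHom_apply, FreeAlgebra.lift_ι_apply]; rfl

lemma bwd_h : bwd q f g α (QGHA.h q f' g') = QGHA.h q f g + algebraMap F _ α := by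
  rw [bwd, QGHA.h]; erw [RingQuot.liftAlgHom_mkAlgHom_apply, FreeAlgebra.lift_ι_apply]; rfl

lemma fwd_bwd : (fwd q f g α).comp (bwd q f g α) = AlgHom.id F _ := by
  apply RingQuot.ringQuot_ext'
  apply FreeAlgebra.hom_ext
  funext t
  cases t with
  | x =>
      show fwd q f g α (bwd q f g α (QGHA.x q f' g')) = QGHA.x q f' g'
      rw [bwd_x, fwd_x]
  | y =>
      show fwd q f g α (bwd q f g α (QGHA.y q f' g')) = QGHA.y q f' g'
      rw [bwd_y, fwd_y]
  | h =>
      show fwd q f g α (bwd q f g α (QGHA.h q f' g')) = QGHA.h q f' g'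
      rw [bwd_h, map_add, fwd_h, AlgHom.commutes, sub_add_cancel]

lemma bwd_fwd : (bwd q f g α).comp (fwd q f g α) = AlgHom.id F _ := by
  apply RingQuot.ringQuot_ext'
  apply FreeAlgebra.hom_ext
  funext t
  cases t with
  | x =>
      show bwd q f g α (fwd q f g α (QGHA.x q f g)) = QGHA.x q f g
      rw [fwd_x, bwd_x]
  | y =>
      show bwd q f g α (fwd q f g α (QGHA.y q f g)) = QGHA.y q f g
      rw [fwd_y, bwd_y]
  | h =>
      show bwd q f g α (fwd q f g α (QGHA.h q f g)) = QGHA.h q f g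
      rw [fwd_h, map_sub, bwd_h, AlgHom.commutes, add_sub_cancel_right]

end QGHAAux

/-- For any field `F`, `q ∈ F`, `f, g ∈ F[h]` and `α ∈ F`, there is an
`F`-algebra isomorphism `H_q(f, g) ≅ H_q(f(h−α)+α, g(h−α))` sending `x ↦ x`, `y ↦ y` and
`h ↦ h − α`. -/
theorem qgha_iso_shift {F : Type*} [Field F] (q : F) (f g : F[X]) (α : F) :
    ∃ φ : QGHA F q f g ≃ₐ[F] QGHA F q (f.comp (X - C α) + C α) (g.comp (X - C α)),
      φ (QGHA.x q f g) = QGHA.x q (f.comp (X - C α) + C α) (g.comp (X - C α)) ∧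
      φ (QGHA.y q f g) = QGHA.y q (f.comp (X - C α) + C α) (g.comp (X - C α)) ∧
      φ (QGHA.h q f g) =
        QGHA.h q (f.comp (X - C α) + C α) (g.comp (X - C α)) - algebraMap F _ α := by
  refine ⟨AlgEquiv.ofAlgHom (QGHAAux.fwd q f g α) (QGHAAux.bwd q f g α)
    (QGHAAux.fwd_bwd q f g α) (QGHAAux.bwd_fwd q f g α), ?_, ?_, ?_⟩
  · exact QGHAAux.fwd_x q f g α
  · exact QGHAAux.fwd_y q f g α
  · exact QGHAAux.fwd_h q f g α
end

section
/- Let F be a field, q ∈ F and f, g ∈ F[h]. Then the set { x^i h^j y^k : i, j, k ∈ ℤ_{≥0} } is an F-vector space basis of the quantum generalized Heisenberg algebra H_q(f,g). More generally, for any basis {v_j}_{j∈ℤ_{≥0}} of F[h], the set { x^i v_j y^k : i, j, k ∈ ℤ_{≥0} } is a basis of H_q(f,g). -/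
open Polynomial

namespace QGHAProof
open Finsupp

variable {F : Type*} [Field F]

noncomputable def fiter (f : F[X]) : ℕ → F[X]
  | 0 => X
  | n+1 => f.comp (fiter f n)

abbrev V (F : Type*) [Field F] : Type _ := (ℕ × ℕ) →₀ F[X]

noncomputable def Xhat : V F →ₗ[F] V F :=
  Finsupp.lmapDomain F[X] F (fun ik => (ik.1 + 1, ik.2))

noncomputable def Hhat (f : F[X]) : V F →ₗ[F] V F :=
  Finsupp.lsum ℕ (fun ik => (Finsupp.lsingle ik).comp (LinearMap.mulLeft F (fiter f ik.1)))

lemma Xhat_single (i k : ℕ) (p : F[X]) :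
    Xhat (single (i,k) p) = single (i+1,k) p := by
  simp [Xhat, Finsupp.lmapDomain_apply, Finsupp.mapDomain_single]

lemma Hhat_single (f : F[X]) (i k : ℕ) (p : F[X]) :
    Hhat f (single (i,k) p) = single (i,k) (fiter f i * p) := by
  simp [Hhat]

lemma Hhat_pow_single (f : F[X]) (n i k : ℕ) (p : F[X]) :
    (Hhat f ^ n) (single (i,k) p) = single (i,k) (fiter f i ^ n * p) := by
  induction n generalizing p with
  | zero => simp
  | succ n ih =>
      rw [pow_succ, Module.End.mul_apply, Hhat_single, ih]
      congr 1
      ring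

lemma aeval_Hhat_single (f P : F[X]) (i k : ℕ) (p : F[X]) :
    aeval (Hhat f) P (single (i,k) p) = single (i,k) (P.comp (fiter f i) * p) := by
  induction P using Polynomial.induction_on' with
  | add P Q hP hQ => simp [hP, hQ, add_comp, add_mul]
  | monomial n a =>
      rw [aeval_monomial, Module.End.mul_apply, Hhat_pow_single,
        Module.algebraMap_end_apply, Finsupp.smul_single]
      congr 1
      simp [Polynomial.smul_eq_C_mul, mul_assoc, Polynomial.monomial_comp]

noncomputable def Yslot (q : F) (f g : F[X]) : ℕ → ℕ → F[X] →ₗ[F] V F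
  | 0, k => (Finsupp.lsingle (0, k+1)).comp (aeval f).toLinearMap
  | (i+1), k => q • (Xhat.comp (Yslot q f g i k)) +
      (Finsupp.lsingle (i,k)).comp (LinearMap.mulLeft F (g.comp (fiter f i)))

noncomputable def Yhat (q : F) (f g : F[X]) : V F →ₗ[F] V F :=
  Finsupp.lsum ℕ (fun ik => Yslot q f g ik.1 ik.2)

lemma Yhat_single (q : F) (f g : F[X]) (i k : ℕ) (p : F[X]) :
    Yhat q f g (single (i,k) p) = Yslot q f g i k p := by
  simp [Yhat]

lemma aeval_Hhat_comp_Xhat (f Q : F[X]) :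
    (aeval (Hhat f) Q) ∘ₗ Xhat = Xhat ∘ₗ (aeval (Hhat f) (Q.comp f)) := by
  apply Finsupp.lhom_ext
  rintro ⟨i, k⟩ p
  simp only [LinearMap.comp_apply, Xhat_single, aeval_Hhat_single]
  rw [show fiter f (i+1) = f.comp (fiter f i) from rfl, ← comp_assoc]

lemma aeval_Hhat_Xhat_apply (f Q : F[X]) (w : V F) :
    (aeval (Hhat f) Q) (Xhat w) = Xhat ((aeval (Hhat f) (Q.comp f)) w) := by
  have := congrArg (fun (T : V F →ₗ[F] V F) => T w) (aeval_Hhat_comp_Xhat f Q)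
  simpa using this

lemma Yslot_aeval (q : F) (f g : F[X]) (i k : ℕ) (p P : F[X]) :
    Yslot q f g i k (P.comp (fiter f i) * p)
      = aeval (Hhat f) (P.comp f) (Yslot q f g i k p) := by
  induction i generalizing P with
  | zero =>
      simp [Yslot, fiter, aeval_Hhat_single, comp_X, ← comp_eq_aeval, mul_comp]
  | succ i ih =>
      have hfit : P.comp (fiter f (i+1)) = (P.comp f).comp (fiter f i) := by
        rw [show fiter f (i+1) = f.comp (fiter f i) from rfl, ← comp_assoc]
      simp only [Yslot, LinearMap.add_apply, LinearMap.smul_apply, LinearMap.comp_apply,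
        LinearMap.mulLeft_apply, hfit, ih (P.comp f), map_add, map_smul,
        aeval_Hhat_Xhat_apply, Finsupp.lsingle_apply, aeval_Hhat_single]
      congr 2
      ring
lemma rel_hx_end (f : F[X]) :
    (Hhat f : Module.End F (V F)) * Xhat = Xhat * aeval (Hhat f) f := by
  apply Finsupp.lhom_ext
  rintro ⟨i, k⟩ p
  simp only [Module.End.mul_apply, Xhat_single, Hhat_single, aeval_Hhat_single]
  rw [show fiter f (i+1) = f.comp (fiter f i) from rfl]

lemma rel_yh_end (q : F) (f g : F[X]) :
    (Yhat q f g : Module.End F (V F)) * Hhat f = aeval (Hhat f) f * Yhat q f g := by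
  apply Finsupp.lhom_ext
  rintro ⟨i, k⟩ p
  have := Yslot_aeval q f g i k p X
  simp only [X_comp] at this
  simp only [Module.End.mul_apply, Hhat_single, Yhat_single, this]

lemma rel_yx_end (q : F) (f g : F[X]) :
    (Yhat q f g : Module.End F (V F)) * Xhat
      = q • ((Xhat : Module.End F (V F)) * Yhat q f g) + aeval (Hhat f) g := by
  apply Finsupp.lhom_ext
  rintro ⟨i, k⟩ p
  simp [Module.End.mul_apply, Xhat_single, Yhat_single, aeval_Hhat_single, Yslot]

noncomputable def genMap (q : F) (f g : F[X]) : QGHAGen → Module.End F (V F)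
  | QGHAGen.x => Xhat
  | QGHAGen.y => Yhat q f g
  | QGHAGen.h => Hhat f

noncomputable def phi (q : F) (f g : F[X]) : FreeAlgebra F QGHAGen →ₐ[F] Module.End F (V F) :=
  FreeAlgebra.lift F (genMap q f g)

lemma phi_rel (q : F) (f g : F[X]) :
    ∀ ⦃a b : FreeAlgebra F QGHAGen⦄, QGHARel F q f g a b → phi q f g a = phi q f g b := by
  intro a b r
  cases r with
  | hx =>
      simp only [map_mul, phi, FreeAlgebra.lift_ι_apply, ← aeval_algHom_apply, genMap]
      exact rel_hx_end f
  | yh =>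
      simp only [map_mul, phi, FreeAlgebra.lift_ι_apply, ← aeval_algHom_apply, genMap]
      exact rel_yh_end q f g
  | yx =>
      simp only [map_mul, map_add, map_smul, phi, FreeAlgebra.lift_ι_apply,
        ← aeval_algHom_apply, genMap]
      exact rel_yx_end q f g

noncomputable def rho (q : F) (f g : F[X]) : QGHA F q f g →ₐ[F] Module.End F (V F) :=
  RingQuot.liftAlgHom F ⟨phi q f g, phi_rel q f g⟩

lemma rho_x (q : F) (f g : F[X]) : rho q f g (QGHA.x q f g) = Xhat := by
  rw [rho, QGHA.x]
  erw [RingQuot.liftAlgHom_mkAlgHom_apply]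
  simp [phi, FreeAlgebra.lift_ι_apply, genMap]

lemma rho_y (q : F) (f g : F[X]) : rho q f g (QGHA.y q f g) = Yhat q f g := by
  rw [rho, QGHA.y]
  erw [RingQuot.liftAlgHom_mkAlgHom_apply]
  simp [phi, FreeAlgebra.lift_ι_apply, genMap]

lemma rho_h (q : F) (f g : F[X]) : rho q f g (QGHA.h q f g) = Hhat f := by
  rw [rho, QGHA.h]
  erw [RingQuot.liftAlgHom_mkAlgHom_apply]
  simp [phi, FreeAlgebra.lift_ι_apply, genMap]
section QGHAside

variable (q : F) (f g : F[X])

lemma mk_aeval (p : F[X]) :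
    aeval (QGHA.h q f g) p
      = RingQuot.mkAlgHom F (QGHARel F q f g) (aeval (FreeAlgebra.ι F QGHAGen.h) p) :=
  (aeval_algHom_apply (RingQuot.mkAlgHom F (QGHARel F q f g))
    (FreeAlgebra.ι F QGHAGen.h) p)

lemma qgha_hx : QGHA.h q f g * QGHA.x q f g = QGHA.x q f g * aeval (QGHA.h q f g) f := by
  have h1 := RingQuot.mkAlgHom_rel F (QGHARel.hx (F := F) (q := q) (f := f) (g := g))
  simp only [map_mul] at h1
  rw [mk_aeval]
  exact h1

lemma qgha_yh : QGHA.y q f g * QGHA.h q f g = aeval (QGHA.h q f g) f * QGHA.y q f g := by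
  have h1 := RingQuot.mkAlgHom_rel F (QGHARel.yh (F := F) (q := q) (f := f) (g := g))
  simp only [map_mul] at h1
  rw [mk_aeval]
  exact h1

lemma qgha_yx : QGHA.y q f g * QGHA.x q f g
    = q • (QGHA.x q f g * QGHA.y q f g) + aeval (QGHA.h q f g) g := by
  have h1 := RingQuot.mkAlgHom_rel F (QGHARel.yx (F := F) (q := q) (f := f) (g := g))
  simp only [map_mul, map_add, map_smul] at h1
  rw [mk_aeval]
  exact h1

lemma hpow_x (n : ℕ) : QGHA.h q f g ^ n * QGHA.x q f g
    = QGHA.x q f g * (aeval (QGHA.h q f g) f) ^ n := by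
  induction n with
  | zero => simp
  | succ n ih =>
      rw [pow_succ, mul_assoc, qgha_hx, ← mul_assoc, ih, mul_assoc, ← pow_succ]

lemma aeval_h_mul_x (P : F[X]) : aeval (QGHA.h q f g) P * QGHA.x q f g
    = QGHA.x q f g * aeval (QGHA.h q f g) (P.comp f) := by
  induction P using Polynomial.induction_on' with
  | add P Q hP hQ => simp only [map_add, add_mul, mul_add, add_comp, hP, hQ]
  | monomial n a =>
      simp only [aeval_monomial, monomial_comp, map_mul, map_pow, aeval_C]
      rw [mul_assoc, hpow_x, ← mul_assoc, Algebra.commutes, mul_assoc]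

lemma aeval_h_mul_xpow (i : ℕ) (P : F[X]) : aeval (QGHA.h q f g) P * QGHA.x q f g ^ i
    = QGHA.x q f g ^ i * aeval (QGHA.h q f g) (P.comp (fiter f i)) := by
  induction i generalizing P with
  | zero => simp [fiter]
  | succ i ih =>
      rw [pow_succ', ← mul_assoc, aeval_h_mul_x, mul_assoc, ih, ← mul_assoc, ← pow_succ',
        show fiter f (i+1) = f.comp (fiter f i) from rfl, ← comp_assoc]

lemma y_mul_hpow (n : ℕ) : QGHA.y q f g * QGHA.h q f g ^ n
    = (aeval (QGHA.h q f g) f) ^ n * QGHA.y q f g := by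
  induction n with
  | zero => simp
  | succ n ih =>
      rw [pow_succ, ← mul_assoc, ih, mul_assoc, qgha_yh, ← mul_assoc, ← pow_succ]

lemma y_mul_aeval_h (P : F[X]) : QGHA.y q f g * aeval (QGHA.h q f g) P
    = aeval (QGHA.h q f g) (P.comp f) * QGHA.y q f g := by
  induction P using Polynomial.induction_on' with
  | add P Q hP hQ => simp only [map_add, add_mul, mul_add, add_comp, hP, hQ]
  | monomial n a =>
      simp only [aeval_monomial, monomial_comp, map_mul, map_pow, aeval_C]
      rw [← mul_assoc, ← Algebra.commutes, mul_assoc, y_mul_hpow, ← mul_assoc, mul_assoc]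

end QGHAside

section Span

variable (q : F) (f g : F[X]) (v : Module.Basis ℕ F F[X])

/-- The candidate basis family. -/
noncomputable def mon : ℕ × ℕ × ℕ → QGHA F q f g := fun ijk =>
  QGHA.x q f g ^ ijk.1 * aeval (QGHA.h q f g) (v ijk.2.1) * QGHA.y q f g ^ ijk.2.2

noncomputable def TT : Submodule F (QGHA F q f g) :=
  Submodule.span F (Set.range (mon q f g v))

lemma mem_TT (i k : ℕ) (P : F[X]) :
    QGHA.x q f g ^ i * aeval (QGHA.h q f g) P * QGHA.y q f g ^ k ∈ TT q f g v := by
  have hP : P ∈ Submodule.span F (Set.range v) := by rw [Module.Basis.span_eq]; trivial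
  refine Submodule.span_induction ?_ ?_ ?_ ?_ hP
  · rintro p ⟨j, rfl⟩
    exact Submodule.subset_span ⟨(i, j, k), rfl⟩
  · simp
  · intro a b _ _ ha hb
    simpa only [map_add, mul_add, add_mul] using add_mem ha hb
  · intro c a _ ha
    rw [map_smul, mul_smul_comm, smul_mul_assoc]
    exact Submodule.smul_mem _ _ ha

lemma x_mul_mem : ∀ t ∈ TT q f g v, QGHA.x q f g * t ∈ TT q f g v := by
  intro t ht
  refine Submodule.span_induction ?_ ?_ ?_ ?_ ht
  · rintro p ⟨⟨i, j, k⟩, rfl⟩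
    show QGHA.x q f g * (QGHA.x q f g ^ i * aeval (QGHA.h q f g) (v j) * QGHA.y q f g ^ k)
        ∈ TT q f g v
    rw [← mul_assoc, ← mul_assoc, ← pow_succ']
    exact Submodule.subset_span ⟨(i+1, j, k), rfl⟩
  · simp
  · intro a b _ _ ha hb
    simpa only [mul_add] using add_mem ha hb
  · intro c a _ ha
    rw [mul_smul_comm]
    exact Submodule.smul_mem _ _ ha

lemma h_mul_xpow (i : ℕ) : QGHA.h q f g * QGHA.x q f g ^ i
    = QGHA.x q f g ^ i * aeval (QGHA.h q f g) (fiter f i) := by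
  have h1 := aeval_h_mul_xpow q f g i X
  rw [X_comp, aeval_X] at h1
  exact h1

lemma h_mul_aux (i k : ℕ) (P : F[X]) :
    QGHA.h q f g * (QGHA.x q f g ^ i * aeval (QGHA.h q f g) P * QGHA.y q f g ^ k)
      ∈ TT q f g v := by
  rw [← mul_assoc, ← mul_assoc, h_mul_xpow, mul_assoc (QGHA.x q f g ^ i), ← map_mul]
  exact mem_TT q f g v i k _

lemma h_mul_mem : ∀ t ∈ TT q f g v, QGHA.h q f g * t ∈ TT q f g v := by
  intro t ht
  refine Submodule.span_induction ?_ ?_ ?_ ?_ ht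
  · rintro p ⟨⟨i, j, k⟩, rfl⟩
    exact h_mul_aux q f g v i k (v j)
  · simp
  · intro a b _ _ ha hb
    simpa only [mul_add] using add_mem ha hb
  · intro c a _ ha
    rw [mul_smul_comm]
    exact Submodule.smul_mem _ _ ha

lemma y_mul_aux (i k : ℕ) (P : F[X]) :
    QGHA.y q f g * (QGHA.x q f g ^ i * aeval (QGHA.h q f g) P * QGHA.y q f g ^ k)
      ∈ TT q f g v := by
  induction i generalizing P with
  | zero =>
      rw [pow_zero, one_mul, ← mul_assoc, y_mul_aeval_h, mul_assoc, ← pow_succ']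
      have := mem_TT q f g v 0 (k+1) (P.comp f)
      simpa using this
  | succ i ih =>
      have hre : QGHA.x q f g ^ (i+1) * aeval (QGHA.h q f g) P * QGHA.y q f g ^ k
          = QGHA.x q f g *
            (QGHA.x q f g ^ i * aeval (QGHA.h q f g) P * QGHA.y q f g ^ k) := by
        rw [pow_succ', mul_assoc, mul_assoc, mul_assoc]
      rw [hre, ← mul_assoc, qgha_yx, add_mul, smul_mul_assoc, mul_assoc]
      refine add_mem (Submodule.smul_mem _ _ ?_) ?_
      · exact x_mul_mem q f g v _ (ih P)
      · rw [← mul_assoc, ← mul_assoc, aeval_h_mul_xpow, mul_assoc (QGHA.x q f g ^ i),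
          ← map_mul]
        exact mem_TT q f g v i k _

lemma y_mul_mem : ∀ t ∈ TT q f g v, QGHA.y q f g * t ∈ TT q f g v := by
  intro t ht
  refine Submodule.span_induction ?_ ?_ ?_ ?_ ht
  · rintro p ⟨⟨i, j, k⟩, rfl⟩
    exact y_mul_aux q f g v i k (v j)
  · simp
  · intro a b _ _ ha hb
    simpa only [mul_add] using add_mem ha hb
  · intro c a _ ha
    rw [mul_smul_comm]
    exact Submodule.smul_mem _ _ ha

lemma one_mem_TT : (1 : QGHA F q f g) ∈ TT q f g v := by
  have := mem_TT q f g v 0 0 1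
  simpa using this

noncomputable def mkQ : FreeAlgebra F QGHAGen →ₐ[F] QGHA F q f g :=
  RingQuot.mkAlgHom F (QGHARel F q f g)

lemma TT_eq_top : TT q f g v = ⊤ := by
  rw [eq_top_iff]
  rintro a -
  obtain ⟨w, rfl⟩ := RingQuot.mkAlgHom_surjective F (QGHARel F q f g) a
  have key : ∀ w : FreeAlgebra F QGHAGen, ∀ t ∈ TT q f g v,
      mkQ q f g w * t ∈ TT q f g v := by
    intro w
    refine FreeAlgebra.induction F QGHAGen
      (motive := fun w => ∀ t ∈ TT q f g v, mkQ q f g w * t ∈ TT q f g v) ?_ ?_ ?_ ?_ w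
    · intro r t ht
      rw [AlgHom.commutes, ← Algebra.smul_def]
      exact Submodule.smul_mem _ _ ht
    · rintro (_ | _ | _)
      · exact x_mul_mem q f g v
      · exact y_mul_mem q f g v
      · exact h_mul_mem q f g v
    · intro a b ha hb t ht
      rw [map_mul, mul_assoc]
      exact ha _ (hb t ht)
    · intro a b ha hb t ht
      rw [map_add, add_mul]
      exact add_mem (ha t ht) (hb t ht)
  have h1 := one_mem_TT q f g v
  have h2 := key w 1 h1
  rw [mul_one] at h2
  exact h2

end Span

section Indep

variable (q : F) (f g : F[X]) (v : Module.Basis ℕ F F[X])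

noncomputable def ev0 : QGHA F q f g →ₗ[F] V F :=
  (LinearMap.applyₗ (single ((0 : ℕ), (0 : ℕ)) (1 : F[X]))).comp (rho q f g).toLinearMap

lemma Yhat_pow_v0 (k : ℕ) :
    ((Yhat q f g) ^ k) (single ((0:ℕ), (0:ℕ)) (1 : F[X])) = single (0, k) 1 := by
  induction k with
  | zero => simp
  | succ k ih =>
      rw [pow_succ', Module.End.mul_apply, ih, Yhat_single]
      simp [Yslot]

lemma Xhat_pow_single (i k : ℕ) (p : F[X]) :
    ((Xhat : Module.End F (V F)) ^ i) (single (0, k) p) = single (i, k) p := by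
  induction i with
  | zero => simp
  | succ i ih => rw [pow_succ', Module.End.mul_apply, ih, Xhat_single]

lemma ev0_mon (i j k : ℕ) :
    ev0 q f g (mon q f g v (i, j, k)) = single (i, k) (v j) := by
  show rho q f g (QGHA.x q f g ^ i * aeval (QGHA.h q f g) (v j) * QGHA.y q f g ^ k)
      (single (0, 0) 1) = single (i, k) (v j)
  rw [map_mul, map_mul, map_pow, map_pow, rho_x, rho_y, ← aeval_algHom_apply, rho_h,
    Module.End.mul_apply, Module.End.mul_apply, Yhat_pow_v0, aeval_Hhat_single,
    Xhat_pow_single]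
  simp [fiter]

noncomputable def sigmaEquiv : (ℕ × ℕ × ℕ) ≃ ((_ : ℕ × ℕ) × ℕ) where
  toFun := fun ijk => ⟨(ijk.1, ijk.2.2), ijk.2.1⟩
  invFun := fun s => (s.1.1, s.2, s.1.2)
  left_inv := fun _ => rfl
  right_inv := fun _ => rfl

lemma mon_indep : LinearIndependent F (mon q f g v) := by
  apply LinearIndependent.of_comp (ev0 q f g)
  have hb := (Finsupp.basis (fun _ : ℕ × ℕ => v)).linearIndependent
  have h2 := hb.comp (sigmaEquiv : (ℕ × ℕ × ℕ) → ((_ : ℕ × ℕ) × ℕ)) sigmaEquiv.injective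
  have he : (⇑(ev0 q f g) ∘ mon q f g v) = (⇑(Finsupp.basis (fun _ : ℕ × ℕ => v)) ∘ sigmaEquiv) := by
    funext ijk
    obtain ⟨i, j, k⟩ := ijk
    simp only [Function.comp_apply, ev0_mon, Finsupp.coe_basis, sigmaEquiv, Equiv.coe_fn_mk]
  rw [he]
  exact h2

lemma main_basis : ∃ b : Module.Basis (ℕ × ℕ × ℕ) F (QGHA F q f g),
    ∀ i j k : ℕ, b (i, j, k) =
      QGHA.x q f g ^ i * aeval (QGHA.h q f g) (v j) * QGHA.y q f g ^ k := by
  refine ⟨Module.Basis.mk (mon_indep q f g v) ?_, ?_⟩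
  · rw [show Submodule.span F (Set.range (mon q f g v)) = TT q f g v from rfl,
      TT_eq_top q f g v]
  · intro i j k
    rw [Module.Basis.mk_apply]
    rfl

end Indep

end QGHAProof

/-- The set `{ x^i h^j y^k : i, j, k ∈ ℕ }` is an `F`-vector-space basis of
`H_q(f,g)`; more generally, for any basis `{v_j}_{j∈ℕ}` of `F[h]`, the set
`{ x^i v_j(h) y^k : i, j, k ∈ ℕ }` is a basis of `H_q(f,g)`. -/
theorem qgha_basis {F : Type*} [Field F] (q : F) (f g : F[X]) :
    (∃ b : Module.Basis (ℕ × ℕ × ℕ) F (QGHA F q f g),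
      ∀ i j k : ℕ, b (i, j, k) = QGHA.x q f g ^ i * QGHA.h q f g ^ j * QGHA.y q f g ^ k) ∧
    (∀ v : Module.Basis ℕ F F[X], ∃ b : Module.Basis (ℕ × ℕ × ℕ) F (QGHA F q f g),
      ∀ i j k : ℕ, b (i, j, k) =
        QGHA.x q f g ^ i * aeval (QGHA.h q f g) (v j) * QGHA.y q f g ^ k) := by
  constructor
  · obtain ⟨b, hb⟩ := QGHAProof.main_basis q f g (Polynomial.basisMonomials F)
    refine ⟨b, fun i j k => ?_⟩
    rw [hb]
    congr 1
    congr 1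
    have : (Polynomial.basisMonomials F) j = X ^ j := by
      simp only [basisMonomials, Module.Basis.coe_ofRepr, AlgEquiv.toLinearEquiv_symm,
        AlgEquiv.toLinearEquiv_apply]
      rw [X_pow_eq_monomial, ← ofFinsupp_single]
      rfl
    rw [this, map_pow, aeval_X]
  · exact fun v => QGHAProof.main_basis q f g v
end
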